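/- Let D be a triangulated category with t-structure whose heart C is O-linear, and let F := D^{≤0} ∩ ⁺D^{≥0} = C ∩ ⁺C be the full subcategory of ϖ-torsion-free objects of C (equivalently ϖ-divisible objects of the tilted heart ⁺C). Then F admits kernels and cokernels: for a morphism f : L → L' in F, the kernel of f in C lies in F and is a kernel of f in F, and the cokernel of f in ⁺C lies in F and is a cokernel of f in F. -/

import Mathlib

open CategoryTheory Limits Triangulated Pretriangulated

variable {O : Type*} [CommRing O] [IsDomain O] [IsDiscreteValuationRing O]
variable {D : Type*} [Category D] [Preadditive D] [Linear O D] [HasZeroObject D]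
  [HasShift D ℤ] [∀ n : ℤ, (CategoryTheory.shiftFunctor D n).Additive] [Pretriangulated D]

/-- The cohomology functors associated to a t-structure with their characteristic
properties. -/
structure TCohomology (t : TStructure D) where
  H : ℤ → D ⥤ D
  mem_heart_LE : ∀ (n : ℤ) (X : D), t.le 0 ((H n).obj X)
  mem_heart_GE : ∀ (n : ℤ) (X : D), t.ge 0 ((H n).obj X)
  le_iff : ∀ (n : ℤ) (X : D), t.le n X ↔ ∀ i : ℤ, n < i → IsZero ((H i).obj X)
  ge_iff : ∀ (n : ℤ) (X : D), t.ge n X ↔ ∀ i : ℤ, i < n → IsZero ((H i).obj X)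

/-- The heart of a t-structure, as a predicate on objects. -/
def heartPred (t : TStructure D) : D → Prop := fun X => t.le 0 X ∧ t.ge 0 X

lemma myHomZero (t : TStructure D) {p q : ℤ} (hpq : p < q) {X Y : D}
    (hX : t.le p X) (hY : t.ge q Y) (f : X ⟶ Y) : f = 0 := by
  have hX' : t.le 0 (X⟦p⟧) := t.le_shift p p 0 (by omega) X hX
  have hY' : t.ge (q - p) (Y⟦p⟧) := t.ge_shift q p (q - p) (by omega) Y hY
  have hY'' : t.ge 1 (Y⟦p⟧) := t.ge_antitone (by omega) _ hY'
  have h := t.zero' ((shiftFunctor D p).map f) hX' hY''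
  apply (shiftFunctor D p).map_injective
  rw [h, Functor.map_zero]

lemma myGeOfOrth (t : TStructure D) (X : D)
    (h : ∀ A : D, t.le (-1) A → ∀ g : A ⟶ X, g = 0) : t.ge 0 X := by
  obtain ⟨A, B, hA, hB, a, b, c, mem⟩ := t.exists_triangle X (-1) 0 (by omega)
  have ha : a = 0 := h A hA a
  have mem' := inv_rot_of_distTriang _ mem
  have hzero : IsZero A := by
    rw [IsZero.iff_id_eq_zero]
    obtain ⟨g, hg⟩ := Triangle.coyoneda_exact₂ _ mem' (𝟙 A) (by
      show 𝟙 A ≫ a = 0; rw [ha, comp_zero])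
    have hg0 : g = 0 := myHomZero t (show (-1:ℤ) < 1 by omega) hA
      (t.ge_shift 0 (-1) 1 (by omega) B hB) g
    rw [hg, hg0]; exact zero_comp
  have : IsIso b := (Triangle.isZero₁_iff_isIso₂ _ mem).1 hzero
  exact ((t.ge 0).prop_iff_of_iso (asIso b : X ≅ B)).2 hB

lemma myLeOfOrth (t : TStructure D) (X : D)
    (h : ∀ B : D, t.ge 1 B → ∀ g : X ⟶ B, g = 0) : t.le 0 X := by
  obtain ⟨A, B, hA, hB, a, b, c, mem⟩ := t.exists_triangle X 0 1 (by omega)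
  have hb : b = 0 := h B hB b
  have mem' := rot_of_distTriang _ mem
  have hzero : IsZero B := by
    rw [IsZero.iff_id_eq_zero]
    obtain ⟨g, hg⟩ := Triangle.yoneda_exact₂ _ mem' (𝟙 B) (by
      show b ≫ 𝟙 B = 0; rw [hb, zero_comp])
    have hg0 : g = 0 := myHomZero t (show (-1:ℤ) < 1 by omega)
      (t.le_shift 0 1 (-1) (by omega) A hA) hB g
    rw [hg, hg0]; exact comp_zero
  have : IsIso a := (Triangle.isZero₃_iff_isIso₁ _ mem).1 hzero
  exact ((t.le 0).prop_iff_of_iso (asIso a : A ≅ X)).1 hA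

lemma myLeExt (t : TStructure D) {T : Triangle D} (hT : T ∈ distTriang D)
    (h1 : t.le 0 T.obj₁) (h3 : t.le 0 T.obj₃) : t.le 0 T.obj₂ := by
  apply myLeOfOrth
  intro B hB g
  obtain ⟨g', hg'⟩ := Triangle.yoneda_exact₂ _ hT g (t.zero' _ h1 hB)
  rw [hg', t.zero' g' h3 hB, comp_zero]

lemma myGeExt (t : TStructure D) {T : Triangle D} (hT : T ∈ distTriang D)
    (h1 : t.ge 0 T.obj₁) (h3 : t.ge 0 T.obj₃) : t.ge 0 T.obj₂ := by
  apply myGeOfOrth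
  intro A hA g
  obtain ⟨g', hg'⟩ := Triangle.coyoneda_exact₂ _ hT g
    (myHomZero t (show (-1:ℤ) < 0 by omega) hA h3 _)
  rw [hg', myHomZero t (show (-1:ℤ) < 0 by omega) hA h1 g', zero_comp]

/-- The zero morphism of an (arbitrary) abelian structure on a full subcategory of `D`
agrees with the zero morphism of `D`. -/
lemma myZeroEq {Z : D → Prop} [Abelian (ObjectProperty.FullSubcategory Z)] (X Y : ObjectProperty.FullSubcategory Z) :
    ((0 : X ⟶ Y).hom : X.obj ⟶ Y.obj) = 0 := by
  have h1 : (0 : X ⟶ Y) ≫ (ObjectProperty.homMk (0 : Y.obj ⟶ Y.obj) : Y ⟶ Y) = (0 : X ⟶ Y) :=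
    Limits.zero_comp
  rw [← h1]
  exact comp_zero

/-- let `C` be the heart of a t-structure on an `O`-linear triangulated
category, `⁺C` the heart of the tilted t-structure (for the `ϖ`-torsion theory) and
`F = C ∩ ⁺C` the full subcategory of `ϖ`-torsion-free ("free") objects.  Then `F` admits
kernels and cokernels: for `f : L ⟶ L'` in `F`, the kernel of `f` computed in `C` lies in
`F` and is a kernel of `f` in `F`, and the cokernel of `f` computed in `⁺C` lies in `F` and
is a cokernel of `f` in `F`. -/
theorem free_category_has_kernels_and_cokernels
    (ϖ : O) (hϖ : Irreducible ϖ)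
    (t t' : TStructure D) (c : TCohomology t)
    [Abelian (ObjectProperty.FullSubcategory (heartPred t))] [Abelian (ObjectProperty.FullSubcategory (heartPred t'))]
    -- `t'` is the tilt of `t` at the `ϖ`-torsion theory of its heart:
    (ht'le : ∀ X : D, t'.le 0 X ↔
      (t.le 1 X ∧ ∃ N : ℕ, (ϖ ^ N : O) • (𝟙 ((c.H 1).obj X)) = 0))
    (ht'ge : ∀ X : D, t'.ge 0 X ↔
      (t.ge 0 X ∧ Mono ((ϖ : O) • (𝟙 ((c.H 0).obj X)))))
    (L L' : D) (hL : heartPred t L ∧ heartPred t' L)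
    (hL' : heartPred t L' ∧ heartPred t' L') (f : L ⟶ L') :
    -- the kernel computed in C:
    (let fC : (⟨L, hL.1⟩ : ObjectProperty.FullSubcategory (heartPred t)) ⟶ ⟨L', hL'.1⟩ := ObjectProperty.homMk f
     let ι : (kernel fC).obj ⟶ L := (kernel.ι fC).hom
     heartPred t' (kernel fC).obj ∧
     (ι ≫ f = 0) ∧
     (∀ (X : D), (heartPred t X ∧ heartPred t' X) → ∀ (g : X ⟶ L), g ≫ f = 0 →
       ∃! u : X ⟶ (kernel fC).obj, u ≫ ι = g)) ∧
    -- the cokernel computed in ⁺C: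
    (let fP : (⟨L, hL.2⟩ : ObjectProperty.FullSubcategory (heartPred t')) ⟶ ⟨L', hL'.2⟩ := ObjectProperty.homMk f
     let π : L' ⟶ (cokernel fP).obj := (cokernel.π fP).hom
     heartPred t (cokernel fP).obj ∧
     (f ≫ π = 0) ∧
     (∀ (X : D), (heartPred t X ∧ heartPred t' X) → ∀ (g : L' ⟶ X), f ≫ g = 0 →
       ∃! u : (cokernel fP).obj ⟶ X, π ≫ u = g)) := by
  constructor
  · -- the kernel part
    set fC : (⟨L, hL.1⟩ : ObjectProperty.FullSubcategory (heartPred t)) ⟶ ⟨L', hL'.1⟩ := ObjectProperty.homMk f with hfC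
    set K : ObjectProperty.FullSubcategory (heartPred t) := kernel fC with hKdef
    have hK : heartPred t K.obj := K.property
    have hKLE : t'.le 0 K.obj := by
      rw [ht'le]
      refine ⟨t.le_monotone (by omega) _ hK.1, 0, ?_⟩
      have hz : IsZero ((c.H 1).obj K.obj) := (c.le_iff 0 K.obj).1 hK.1 1 (by omega)
      rw [pow_zero, one_smul]
      exact hz.eq_of_src _ _
    have hKGE : t'.ge 0 K.obj := by
      apply myGeOfOrth
      intro A hA g
      have hALE : t.le 0 A := by
        have h1 : t'.le 0 (A⟦(-1:ℤ)⟧) := t'.le_shift (-1) (-1) 0 (by omega) A hA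
        have h2 : t.le 1 (A⟦(-1:ℤ)⟧) := ((ht'le _).1 h1).1
        have h3 : (t.le 1).shift (-1) A := by
          rw [ObjectProperty.prop_shift_iff]; exact h2
        rwa [t.shift_le (-1) 1 0 (by omega)] at h3
      have hgι : g ≫ (kernel.ι fC).hom = 0 :=
        myHomZero t' (show (-1:ℤ) < 0 by omega) hA hL.2.2 _
      obtain ⟨A', A'', hA', hA'', u, v, w, memT⟩ := t.exists_triangle A (-1) 0 (by omega)
      have hug : u ≫ g = 0 := myHomZero t (show (-1:ℤ) < 0 by omega) hA' hK.2 _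
      obtain ⟨h, hh⟩ := Triangle.yoneda_exact₂ _ memT g hug
      have hA''LE : t.le 0 A'' :=
        myLeExt t (rot_of_distTriang _ memT) hALE
          (t.le_monotone (show (-2:ℤ) ≤ 0 by omega) _
            (t.le_shift (-1) 1 (-2) (by omega) A' hA'))
      have hv : (Triangle.mk u v w).mor₂ ≫ (h ≫ (kernel.ι fC).hom) = 0 := by
        dsimp at hh ⊢
        rw [← Category.assoc, ← hh]; exact hgι
      obtain ⟨e, he⟩ := Triangle.yoneda_exact₃ _ memT (h ≫ (kernel.ι fC).hom) hv
      have he0 : e = 0 := myHomZero t (show (-2:ℤ) < 0 by omega)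
        (t.le_shift (-1) 1 (-2) (by omega) A' hA') hL.1.2 e
      have hhι : h ≫ (kernel.ι fC).hom = 0 := by
        rw [he, he0, comp_zero]
      have h0 : h = 0 := by
        have hCzero : (ObjectProperty.homMk h : (⟨A'', hA''LE, hA''⟩ : ObjectProperty.FullSubcategory (heartPred t)) ⟶ K)
            ≫ kernel.ι fC = 0 :=
          ObjectProperty.hom_ext _ <| hhι.trans (myZeroEq (⟨A'', hA''LE, hA''⟩ : ObjectProperty.FullSubcategory (heartPred t))
            ⟨L, hL.1⟩).symm
        have : (ObjectProperty.homMk h : (⟨A'', hA''LE, hA''⟩ : ObjectProperty.FullSubcategory (heartPred t)) ⟶ K) = 0 :=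
          Limits.zero_of_comp_mono (kernel.ι fC) hCzero
        exact (congrArg InducedCategory.Hom.hom this).trans (myZeroEq (⟨A'', hA''LE, hA''⟩ : ObjectProperty.FullSubcategory (heartPred t)) K)
      rw [hh, h0]; exact comp_zero
    refine ⟨⟨hKLE, hKGE⟩, (congrArg InducedCategory.Hom.hom (kernel.condition fC)).trans (myZeroEq K ⟨L', hL'.1⟩), ?_⟩
    intro X hX g hg
    have hg' : (ObjectProperty.homMk g : (⟨X, hX.1⟩ : ObjectProperty.FullSubcategory (heartPred t)) ⟶ ⟨L, hL.1⟩) ≫ fC = 0 :=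
      ObjectProperty.hom_ext _ <| hg.trans (myZeroEq ⟨X, hX.1⟩ ⟨L', hL'.1⟩).symm
    refine ⟨(kernel.lift fC _ hg').hom, congrArg InducedCategory.Hom.hom (kernel.lift_ι fC _ hg'), ?_⟩
    intro y hy
    have : (ObjectProperty.homMk y : (⟨X, hX.1⟩ : ObjectProperty.FullSubcategory (heartPred t)) ⟶ K) ≫ kernel.ι fC
        = kernel.lift fC _ hg' ≫ kernel.ι fC := by
      rw [kernel.lift_ι]
      exact ObjectProperty.hom_ext _ hy
    exact congrArg InducedCategory.Hom.hom ((cancel_mono (kernel.ι fC)).1 this)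
  · -- the cokernel part
    set fP : (⟨L, hL.2⟩ : ObjectProperty.FullSubcategory (heartPred t')) ⟶ ⟨L', hL'.2⟩ := ObjectProperty.homMk f with hfP
    set Q : ObjectProperty.FullSubcategory (heartPred t') := cokernel fP with hQdef
    have hQ : heartPred t' Q.obj := Q.property
    let πD : L' ⟶ Q.obj := (cokernel.π fP).hom
    have hQGE : t.ge 0 Q.obj := ((ht'ge Q.obj).1 hQ.2).1
    have hQLE : t.le 0 Q.obj := by
      apply myLeOfOrth
      intro B hB g
      have hBGE' : t'.ge 0 B := by
        rw [ht'ge]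
        refine ⟨t.ge_antitone (by omega) _ hB, ?_⟩
        have hz : IsZero ((c.H 0).obj B) := (c.ge_iff 1 B).1 hB 0 (by omega)
        exact ⟨fun {W} g₁ g₂ _ => (hz.eq_of_tgt g₁ 0).trans (hz.eq_of_tgt g₂ 0).symm⟩
      obtain ⟨B', B'', hB', hB'', u, v, w, memT⟩ := t'.exists_triangle B 0 1 (by omega)
      have hgv : g ≫ v = 0 := myHomZero t' (show (0:ℤ) < 1 by omega) hQ.1 hB'' _
      obtain ⟨h, hh⟩ := Triangle.coyoneda_exact₂ _ memT g hgv
      have hGE2 : t'.ge 2 (B''⟦(-1:ℤ)⟧) := t'.ge_shift 1 (-1) 2 (by omega) B'' hB''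
      have hB'GE : t'.ge 0 B' :=
        myGeExt t' (inv_rot_of_distTriang _ memT)
          (t'.ge_antitone (show (0:ℤ) ≤ 2 by omega) _ hGE2) hBGE'
      have hπg : πD ≫ g = 0 := t.zero' _ hL'.1.1 hB
      have hπhu : (πD ≫ h) ≫ (Triangle.mk u v w).invRotate.mor₂ = 0 := by
        show (πD ≫ h) ≫ (Triangle.mk u v w).mor₁ = 0
        rw [Category.assoc, ← hh]; exact hπg
      obtain ⟨e, he⟩ := Triangle.coyoneda_exact₂ _ (inv_rot_of_distTriang _ memT)
        (πD ≫ h) hπhu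
      have he0 : e = 0 := myHomZero t' (show (0:ℤ) < 2 by omega) hL'.2.1 hGE2 e
      have hπh : πD ≫ h = 0 := by
        exact he.trans (by rw [he0]; exact zero_comp)
      have h0 : h = 0 := by
        have hCzero : cokernel.π fP ≫
            (ObjectProperty.homMk h : Q ⟶ (⟨B', hB', hB'GE⟩ : ObjectProperty.FullSubcategory (heartPred t'))) = 0 :=
          ObjectProperty.hom_ext _ <| hπh.trans (myZeroEq (⟨L', hL'.2⟩ : ObjectProperty.FullSubcategory (heartPred t'))
            ⟨B', hB', hB'GE⟩).symm
        have : (ObjectProperty.homMk h : Q ⟶ (⟨B', hB', hB'GE⟩ : ObjectProperty.FullSubcategory (heartPred t'))) = 0 :=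
          Limits.zero_of_epi_comp (cokernel.π fP) hCzero
        exact (congrArg InducedCategory.Hom.hom this).trans (myZeroEq Q ⟨B', hB', hB'GE⟩)
      rw [hh, h0]; exact zero_comp
    refine ⟨⟨hQLE, hQGE⟩, (congrArg InducedCategory.Hom.hom (cokernel.condition fP)).trans (myZeroEq ⟨L, hL.2⟩ Q), ?_⟩
    intro X hX g hg
    have hg' : fP ≫ (ObjectProperty.homMk g : (⟨L', hL'.2⟩ : ObjectProperty.FullSubcategory (heartPred t')) ⟶ ⟨X, hX.2⟩)
        = 0 := ObjectProperty.hom_ext _ <| hg.trans (myZeroEq ⟨L, hL.2⟩ ⟨X, hX.2⟩).symm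
    refine ⟨(cokernel.desc fP _ hg').hom, congrArg InducedCategory.Hom.hom (cokernel.π_desc fP _ hg'), ?_⟩
    intro y hy
    have : cokernel.π fP ≫ (ObjectProperty.homMk y : Q ⟶ (⟨X, hX.2⟩ : ObjectProperty.FullSubcategory (heartPred t')))
        = cokernel.π fP ≫ cokernel.desc fP _ hg' := by
      rw [cokernel.π_desc]
      exact ObjectProperty.hom_ext _ hy
    exact congrArg InducedCategory.Hom.hom ((cancel_epi (cokernel.π fP)).1 this)
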